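/- There exist an integer m ≥ 3 and s ∈ (0,1) such that, setting t = 2m·log((1+s)/(1−s)) (the common hyperbolic perimeter), one has 2mπ/μ(s^m) < 2π/μ(tanh(t/4)); in particular m = 5 and s = 1/2 work, i.e., 10π/μ(1/32) < 2π/μ(tanh((5/2)·log 3)). Equivalently, the capacity of the nonconvex star E = ∪_{k=1}^m [0, s·e^{2πik/m}], which equals 2mπ/μ(s^m), is strictly smaller than the capacity 2π/μ(tanh(t/4)) of a segment [0, tanh(t/4)] having the same hyperbolic perimeter t. -/

import Mathlib

open Real MeasureTheory Set
noncomputable section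

/-- Complete elliptic integral of the first kind. -/
def ellK (r : ℝ) : ℝ := ∫ x in (0:ℝ)..1, 1 / Real.sqrt ((1 - x ^ 2) * (1 - r ^ 2 * x ^ 2))

/-- The Grötzsch modulus function μ. -/
def muFun (r : ℝ) : ℝ := (Real.pi / 2) * ellK (Real.sqrt (1 - r ^ 2)) / ellK r

open intervalIntegral

lemma aux_integrable {r : ℝ} (h0 : 0 ≤ r) (h1 : r < 1) :
    IntervalIntegrable (fun x => 1 / Real.sqrt ((1 - x ^ 2) * (1 - r ^ 2 * x ^ 2))) volume 0 1 := by
  have hr2 : (0:ℝ) < 1 - r ^ 2 := by nlinarith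
  have hbase : IntervalIntegrable (fun x : ℝ => x ^ (-(1:ℝ)/2)) volume 0 1 :=
    intervalIntegrable_rpow' (by norm_num)
  have hg0 : IntervalIntegrable (fun x : ℝ => (1 - x) ^ (-(1:ℝ)/2)) volume 0 1 := by
    have := (hbase.comp_sub_left 1).symm
    simpa using this
  have hg : IntervalIntegrable (fun x : ℝ => (Real.sqrt (1 - r ^ 2))⁻¹ * (1 - x) ^ (-(1:ℝ)/2))
      volume 0 1 := hg0.const_mul _
  refine hg.mono_fun' ?_ ?_
  · apply Measurable.aestronglyMeasurable
    exact measurable_const.div ((continuous_sqrt.comp (by continuity)).measurable)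
  · rw [Filter.EventuallyLE, ae_restrict_iff' measurableSet_uIoc]
    refine Filter.Eventually.of_forall fun x hx => ?_
    rw [Set.uIoc_of_le (by norm_num : (0:ℝ) ≤ 1)] at hx
    obtain ⟨hx0, hx1⟩ := hx
    have hx0' : 0 < x := hx0
    have h1x : 0 ≤ 1 - x := by linarith
    have hfnn : 0 ≤ 1 / Real.sqrt ((1 - x ^ 2) * (1 - r ^ 2 * x ^ 2)) := by positivity
    rw [Real.norm_of_nonneg hfnn]
    have hrw : (1 - x) ^ (-(1:ℝ)/2) = (Real.sqrt (1 - x))⁻¹ := by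
      rw [Real.sqrt_eq_rpow, ← Real.rpow_neg h1x]
      norm_num
    rw [hrw]
    have hrx : 0 ≤ 1 - r ^ 2 * x ^ 2 := by nlinarith [sq_nonneg r, sq_nonneg x]
    have haux : 0 ≤ x * (1 - r ^ 2 * x ^ 2) + r ^ 2 * (1 - x ^ 2) := by
      have : 0 ≤ 1 - x ^ 2 := by nlinarith
      positivity
    have hkey : (1 - x) * (1 - r ^ 2) ≤ (1 - x ^ 2) * (1 - r ^ 2 * x ^ 2) := by
      nlinarith [mul_nonneg h1x haux]
    have hs : Real.sqrt ((1 - x) * (1 - r ^ 2)) ≤ Real.sqrt ((1 - x ^ 2) * (1 - r ^ 2 * x ^ 2)) :=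
      Real.sqrt_le_sqrt hkey
    rcases eq_or_lt_of_le h1x with h | h
    · -- x = 1
      have hx1' : x = 1 := by linarith
      subst hx1'
      simp
    · have hpos : 0 < Real.sqrt ((1 - x) * (1 - r ^ 2)) := Real.sqrt_pos.mpr (by positivity)
      calc 1 / Real.sqrt ((1 - x ^ 2) * (1 - r ^ 2 * x ^ 2))
          ≤ 1 / Real.sqrt ((1 - x) * (1 - r ^ 2)) := by
            apply one_div_le_one_div_of_le hpos hs
        _ = (Real.sqrt (1 - r ^ 2))⁻¹ * (Real.sqrt (1 - x))⁻¹ := by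
            rw [Real.sqrt_mul h1x, one_div, mul_inv, mul_comm]

lemma integrable_arcsin_integrand :
    IntervalIntegrable (fun x : ℝ => 1 / Real.sqrt (1 - x ^ 2)) volume 0 1 := by
  have := aux_integrable (r := 0) le_rfl zero_lt_one
  simpa using this

lemma integral_arcsin_integrand :
    ∫ x in (0:ℝ)..1, 1 / Real.sqrt (1 - x ^ 2) = π / 2 := by
  have h := intervalIntegral.integral_eq_sub_of_hasDeriv_right_of_le
    (by norm_num : (0:ℝ) ≤ 1) (Real.continuous_arcsin.continuousOn)
    (fun x hx => (Real.hasDerivAt_arcsin (by intro h; rw [h] at hx; exact absurd hx.1 (by norm_num))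
      (ne_of_lt hx.2)).hasDerivWithinAt)
    integrable_arcsin_integrand
  simpa [Real.arcsin_one, Real.arcsin_zero] using h

lemma ellK_le {r : ℝ} (h0 : 0 ≤ r) (h1 : r < 1) :
    ellK r ≤ (π / 2) / Real.sqrt (1 - r ^ 2) := by
  have hr2 : (0:ℝ) < 1 - r ^ 2 := by nlinarith
  have hmono := intervalIntegral.integral_mono_on (μ := volume) (by norm_num : (0:ℝ) ≤ 1)
    (aux_integrable h0 h1) (integrable_arcsin_integrand.const_mul (Real.sqrt (1 - r ^ 2))⁻¹)
    (f := fun x => 1 / Real.sqrt ((1 - x ^ 2) * (1 - r ^ 2 * x ^ 2)))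
    (g := fun x => (Real.sqrt (1 - r ^ 2))⁻¹ * (1 / Real.sqrt (1 - x ^ 2)))
    ?_
  · rw [ellK]
    refine hmono.trans ?_
    rw [intervalIntegral.integral_const_mul, integral_arcsin_integrand]
    rw [div_eq_mul_inv]
    ring_nf
    exact le_rfl
  · intro x hx
    obtain ⟨hx0, hx1⟩ := hx
    rcases eq_or_lt_of_le hx1 with h | h
    · subst h
      simp
    · have hx2 : (0:ℝ) < 1 - x ^ 2 := by nlinarith
      have hkey : (1 - x ^ 2) * (1 - r ^ 2) ≤ (1 - x ^ 2) * (1 - r ^ 2 * x ^ 2) := by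
        nlinarith [mul_nonneg (mul_nonneg hx2.le (sq_nonneg r)) hx2.le]
      have hpos : 0 < Real.sqrt ((1 - x ^ 2) * (1 - r ^ 2)) := Real.sqrt_pos.mpr (by positivity)
      calc 1 / Real.sqrt ((1 - x ^ 2) * (1 - r ^ 2 * x ^ 2))
          ≤ 1 / Real.sqrt ((1 - x ^ 2) * (1 - r ^ 2)) :=
            one_div_le_one_div_of_le hpos (Real.sqrt_le_sqrt hkey)
        _ = (Real.sqrt (1 - r ^ 2))⁻¹ * (1 / Real.sqrt (1 - x ^ 2)) := by
            rw [Real.sqrt_mul hx2.le, one_div, mul_inv, mul_comm, one_div]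

lemma integral_inv_one_sub_sq {b : ℝ} (hb0 : 0 < b) (hb1 : b < 1) :
    ∫ x in (0:ℝ)..1, 1 / (1 - b ^ 2 * x ^ 2)
      = (1 / (2 * b)) * Real.log ((1 + b) / (1 - b)) := by
  have hcont : ContinuousOn (fun x : ℝ => 1 / (1 - b ^ 2 * x ^ 2)) (Set.uIcc 0 1) := by
    apply ContinuousOn.div continuousOn_const (by fun_prop)
    intro x hx
    rw [Set.uIcc_of_le (by norm_num : (0:ℝ) ≤ 1)] at hx
    have h1 : b * x < 1 := by
      calc b * x ≤ b * 1 := by nlinarith [hx.1, hx.2]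
        _ < 1 := by linarith
    have h2 : 0 ≤ b * x := mul_nonneg hb0.le hx.1
    nlinarith
  have hd : ∀ x ∈ Set.uIcc (0:ℝ) 1,
      HasDerivAt (fun x : ℝ => (1 / (2 * b)) * (Real.log (1 + b * x) - Real.log (1 - b * x)))
        (1 / (1 - b ^ 2 * x ^ 2)) x := by
    intro x hx
    rw [Set.uIcc_of_le (by norm_num : (0:ℝ) ≤ 1)] at hx
    have hbx1 : b * x < 1 := by
      calc b * x ≤ b * 1 := by nlinarith [hx.1, hx.2]
        _ < 1 := by linarith
    have hbx0 : 0 ≤ b * x := mul_nonneg hb0.le hx.1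
    have hp : (0:ℝ) < 1 + b * x := by linarith
    have hm : (0:ℝ) < 1 - b * x := by linarith
    have d1 : HasDerivAt (fun x : ℝ => 1 + b * x) b x := by
      simpa using ((hasDerivAt_id x).const_mul b).const_add 1
    have d2 : HasDerivAt (fun x : ℝ => 1 - b * x) (-b) x := by
      simpa using ((hasDerivAt_id x).const_mul b).const_sub 1
    have l1 : HasDerivAt (fun x : ℝ => Real.log (1 + b * x)) (b / (1 + b * x)) x :=
      d1.log hp.ne'
    have l2 : HasDerivAt (fun x : ℝ => Real.log (1 - b * x)) (-b / (1 - b * x)) x :=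
      d2.log hm.ne'
    have hden : (0:ℝ) < 1 - b ^ 2 * x ^ 2 := by nlinarith
    have := ((l1.sub l2).const_mul (1 / (2 * b)))
    refine this.congr_deriv ?_
    field_simp
    ring
  have := intervalIntegral.integral_eq_sub_of_hasDerivAt hd
    (hcont.intervalIntegrable)
  rw [this]
  rw [Real.log_div (by linarith) (by linarith)]
  simp

lemma le_ellK {r : ℝ} (h0 : 0 ≤ r) (h1 : r < 1) :
    (1 / (2 * Real.sqrt ((1 + r ^ 2) / 2)))
        * Real.log ((1 + Real.sqrt ((1 + r ^ 2) / 2)) / (1 - Real.sqrt ((1 + r ^ 2) / 2)))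
      ≤ ellK r := by
  set b := Real.sqrt ((1 + r ^ 2) / 2) with hbdef
  have hb2 : b ^ 2 = (1 + r ^ 2) / 2 := Real.sq_sqrt (by positivity)
  have hb0 : 0 < b := Real.sqrt_pos.mpr (by positivity)
  have hb1 : b < 1 := by
    have hr2 : r ^ 2 < 1 := by nlinarith
    have hblt : b ^ 2 < 1 := by rw [hb2]; linarith
    nlinarith [sq_nonneg (b - 1)]
  rw [← integral_inv_one_sub_sq hb0 hb1, ellK]
  have hcont : ContinuousOn (fun x : ℝ => 1 / (1 - b ^ 2 * x ^ 2)) (Set.uIcc 0 1) := by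
    apply ContinuousOn.div continuousOn_const (by fun_prop)
    intro x hx
    rw [Set.uIcc_of_le (by norm_num : (0:ℝ) ≤ 1)] at hx
    have h1' : b * x < 1 := by
      calc b * x ≤ b * 1 := by nlinarith [hx.1, hx.2]
        _ < 1 := by linarith
    have h2 : 0 ≤ b * x := mul_nonneg hb0.le hx.1
    nlinarith
  apply intervalIntegral.integral_mono_ae_restrict (μ := volume) (by norm_num : (0:ℝ) ≤ 1)
    hcont.intervalIntegrable (aux_integrable h0 h1)
  rw [Filter.EventuallyLE, ae_restrict_iff' measurableSet_Icc]
  have hne : ∀ᵐ x : ℝ ∂volume, x ≠ 1 := by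
    rw [ae_iff]
    simp only [ne_eq, not_not, setOf_eq_eq_singleton]
    exact measure_singleton 1
  filter_upwards [hne] with x hxne hx
  obtain ⟨hx0, hx1⟩ := hx
  have hxlt : x < 1 := lt_of_le_of_ne hx1 hxne
  have hu : (0:ℝ) < 1 - x ^ 2 := by nlinarith
  have hv : (0:ℝ) < 1 - r ^ 2 * x ^ 2 := by nlinarith [sq_nonneg (r * x), sq_nonneg r, sq_nonneg x]
  have hsq : Real.sqrt ((1 - x ^ 2) * (1 - r ^ 2 * x ^ 2)) ≤ 1 - b ^ 2 * x ^ 2 := by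
    have h4 : (1 - x ^ 2) * (1 - r ^ 2 * x ^ 2)
        ≤ (((1 - x ^ 2) + (1 - r ^ 2 * x ^ 2)) / 2) ^ 2 := by
      nlinarith [sq_nonneg ((1 - x ^ 2) - (1 - r ^ 2 * x ^ 2))]
    have h5 := (Real.sqrt_le_sqrt h4).trans_eq (Real.sqrt_sq (by positivity))
    calc Real.sqrt ((1 - x ^ 2) * (1 - r ^ 2 * x ^ 2))
        ≤ ((1 - x ^ 2) + (1 - r ^ 2 * x ^ 2)) / 2 := h5
      _ = 1 - b ^ 2 * x ^ 2 := by rw [hb2]; ring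
  have hspos : 0 < Real.sqrt ((1 - x ^ 2) * (1 - r ^ 2 * x ^ 2)) :=
    Real.sqrt_pos.mpr (by positivity)
  exact one_div_le_one_div_of_le hspos hsq

lemma log_ge_one_sub_inv {x : ℝ} (hx : 0 < x) : 1 - 1/x ≤ Real.log x := by
  have h := Real.log_le_sub_one_of_pos (show (0:ℝ) < x⁻¹ by positivity)
  rw [Real.log_inv] at h
  have : x⁻¹ = 1/x := by rw [one_div]
  linarith [h, this ▸ h]

lemma ellK_pos {r : ℝ} (h0 : 0 ≤ r) (h1 : r < 1) : 0 < ellK r := by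
  have h := le_ellK h0 h1
  set b := Real.sqrt ((1 + r ^ 2) / 2) with hbdef
  have hb2 : b ^ 2 = (1 + r ^ 2) / 2 := Real.sq_sqrt (by positivity)
  have hb0 : 0 < b := Real.sqrt_pos.mpr (by positivity)
  have hb1 : b < 1 := by
    have hr2 : r ^ 2 < 1 := by nlinarith
    nlinarith [sq_nonneg (b - 1)]
  refine lt_of_lt_of_le ?_ h
  have hlog : 0 < Real.log ((1 + b) / (1 - b)) := by
    apply Real.log_pos
    rw [lt_div_iff₀ (by linarith)]
    linarith
  positivity

-- lower bound for ellK (√(1023/1024))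
lemma a2_lb : (4.5053:ℝ) ≤ ellK (Real.sqrt (1 - (1/32:ℝ) ^ 2)) := by
  have harg : (1:ℝ) - (1/32:ℝ)^2 = 1023/1024 := by norm_num
  have hr0 : (0:ℝ) ≤ Real.sqrt (1 - (1/32:ℝ)^2) := Real.sqrt_nonneg _
  have hr2 : (Real.sqrt (1 - (1/32:ℝ)^2)) ^ 2 = 1023/1024 := by
    rw [Real.sq_sqrt (by norm_num)]; norm_num
  have hr1 : Real.sqrt (1 - (1/32:ℝ)^2) < 1 := by
    nlinarith [sq_nonneg (Real.sqrt (1 - (1/32:ℝ)^2) - 1)]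
  have h := le_ellK hr0 hr1
  rw [show ((1 + (Real.sqrt (1 - (1/32:ℝ)^2)) ^ 2) / 2) = 2047/2048 by rw [hr2]; norm_num] at h
  set b := Real.sqrt ((2047:ℝ)/2048) with hbdef
  have hb2 : b ^ 2 = 2047/2048 := Real.sq_sqrt (by norm_num)
  have hb0 : 0 < b := Real.sqrt_pos.mpr (by norm_num)
  have hb1 : b < 1 := by nlinarith [sq_nonneg (b - 1)]
  have hblb : (0.9997:ℝ) ≤ b := by
    rw [hbdef, Real.le_sqrt (by norm_num) (by norm_num)]; norm_num
  have h1b : (0:ℝ) < 1 - b := by linarith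
  have hratio : (8189.5:ℝ) ≤ (1 + b) / (1 - b) := by
    have hkey : (1 + b) / (1 - b) = 2048 * (1 + b) ^ 2 := by
      rw [div_eq_iff h1b.ne']
      linear_combination (2048 * (1 + b)) * hb2
    rw [hkey]
    nlinarith [hblb]
  have hlog : (9.0106:ℝ) ≤ Real.log ((1 + b) / (1 - b)) := by
    have h1 : Real.log (8189.5:ℝ) ≤ Real.log ((1 + b) / (1 - b)) :=
      (Real.log_le_log_iff (by norm_num) (by positivity)).mpr hratio
    have h2 : (8189.5:ℝ) = 2 ^ 13 * (8189.5/8192) := by norm_num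
    have h3 : Real.log (8189.5:ℝ) = 13 * Real.log 2 + Real.log (8189.5/8192) := by
      rw [h2, Real.log_mul (by norm_num) (by norm_num), Real.log_pow]; norm_num
    have h4 := log_ge_one_sub_inv (show (0:ℝ) < 8189.5/8192 by norm_num)
    have h5 := Real.log_two_gt_d9
    have h6 : (1:ℝ) - 1/(8189.5/8192) ≥ -0.000306 := by norm_num
    nlinarith [h1, h3, h4, h5, h6]
  have hinv : (1:ℝ)/2 ≤ 1/(2*b) := by
    apply one_div_le_one_div_of_le (by positivity)
    linarith
  calc (4.5053:ℝ) = (1/2) * 9.0106 := by norm_num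
    _ ≤ (1/(2*b)) * Real.log ((1 + b) / (1 - b)) := by
        apply mul_le_mul hinv hlog (by norm_num) (by positivity)
    _ ≤ _ := h

-- lower bound for ellK (121/122)
lemma b1_lb : (3.0945:ℝ) ≤ ellK (121/122) := by
  have h := le_ellK (show (0:ℝ) ≤ 121/122 by norm_num) (show (121:ℝ)/122 < 1 by norm_num)
  rw [show ((1 + ((121:ℝ)/122) ^ 2) / 2) = 29525/29768 by norm_num] at h
  set b := Real.sqrt ((29525:ℝ)/29768) with hbdef
  have hb2 : b ^ 2 = 29525/29768 := Real.sq_sqrt (by norm_num)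
  have hb0 : 0 < b := Real.sqrt_pos.mpr (by norm_num)
  have hb1 : b < 1 := by nlinarith [sq_nonneg (b - 1)]
  have hblb : (0.9959:ℝ) ≤ b := by
    rw [hbdef, Real.le_sqrt (by norm_num) (by norm_num)]; norm_num
  have h1b : (0:ℝ) < 1 - b := by linarith
  have hratio : (488:ℝ) ≤ (1 + b) / (1 - b) := by
    have hkey : (1 + b) / (1 - b) = (29768/243) * (1 + b) ^ 2 := by
      rw [div_eq_iff h1b.ne']
      linear_combination ((29768/243) * (1 + b)) * hb2
    rw [hkey]
    nlinarith [hblb]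
  have hlog : (6.189:ℝ) ≤ Real.log ((1 + b) / (1 - b)) := by
    have h1 : Real.log (488:ℝ) ≤ Real.log ((1 + b) / (1 - b)) :=
      (Real.log_le_log_iff (by norm_num) (by positivity)).mpr hratio
    have h2 : (488:ℝ) = 2 ^ 9 * (488/512) := by norm_num
    have h3 : Real.log (488:ℝ) = 9 * Real.log 2 + Real.log (488/512) := by
      rw [h2, Real.log_mul (by norm_num) (by norm_num), Real.log_pow]; norm_num
    have h4 := log_ge_one_sub_inv (show (0:ℝ) < 488/512 by norm_num)
    have h5 := Real.log_two_gt_d9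
    nlinarith [h1, h3, h4, h5]
  have hinv : (1:ℝ)/2 ≤ 1/(2*b) := by
    apply one_div_le_one_div_of_le (by positivity)
    linarith
  calc (3.0945:ℝ) = (1/2) * 6.189 := by norm_num
    _ ≤ (1/(2*b)) * Real.log ((1 + b) / (1 - b)) := by
        apply mul_le_mul hinv hlog (by norm_num) (by positivity)
    _ ≤ _ := h

-- upper bound for ellK (1/32)
lemma a1_ub : ellK (1/32) ≤ 1.5716 := by
  have h := ellK_le (show (0:ℝ) ≤ 1/32 by norm_num) (show (1:ℝ)/32 < 1 by norm_num)
  have hs : (0.9995:ℝ) ≤ Real.sqrt (1 - (1/32:ℝ)^2) := by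
    rw [Real.le_sqrt (by norm_num) (by norm_num)]; norm_num
  have hπ := Real.pi_lt_d6
  calc ellK (1/32) ≤ (π/2) / Real.sqrt (1 - (1/32:ℝ)^2) := h
    _ ≤ (3.141593/2) / 0.9995 := by
        apply div_le_div₀ (by norm_num) (by linarith) (by norm_num) hs
    _ ≤ 1.5716 := by norm_num

-- upper bound for ellK (√(1-(121/122)^2))
lemma b2_ub : ellK (Real.sqrt (1 - (121/122:ℝ) ^ 2)) ≤ 1.5838 := by
  have hr0 : (0:ℝ) ≤ Real.sqrt (1 - (121/122:ℝ)^2) := Real.sqrt_nonneg _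
  have hr2 : (Real.sqrt (1 - (121/122:ℝ)^2)) ^ 2 = 243/14884 := by
    rw [Real.sq_sqrt (by norm_num)]; norm_num
  have hr1 : Real.sqrt (1 - (121/122:ℝ)^2) < 1 := by
    nlinarith [sq_nonneg (Real.sqrt (1 - (121/122:ℝ)^2) - 1)]
  have h := ellK_le hr0 hr1
  rw [show (1 - (Real.sqrt (1 - (121/122:ℝ)^2)) ^ 2) = ((121:ℝ)/122)^2 by rw [hr2]; norm_num] at h
  rw [Real.sqrt_sq (by norm_num : (0:ℝ) ≤ 121/122)] at h
  have hπ := Real.pi_lt_d6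
  calc ellK (Real.sqrt (1 - (121/122:ℝ)^2)) ≤ (π/2) / (121/122) := h
    _ ≤ (3.141593/2) / (121/122) := by
        apply div_le_div₀ (by norm_num) (by linarith) (by norm_num) le_rfl
    _ ≤ 1.5838 := by norm_num

lemma tanh_val : Real.tanh ((5/2) * Real.log 3) = 121/122 := by
  rw [Real.tanh_eq_sinh_div_cosh, Real.sinh_eq, Real.cosh_eq, Real.exp_neg]
  set E := Real.exp ((5/2) * Real.log 3) with hEdef
  have hE0 : 0 < E := Real.exp_pos _
  have hE2 : E ^ 2 = 243 := by
    rw [hEdef, ← Real.exp_nat_mul]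
    norm_num
    rw [show (2:ℝ) * (5/2 * Real.log 3) = Real.log (3^5) by rw [Real.log_pow]; push_cast; ring]
    rw [Real.exp_log (by norm_num)]
    norm_num
  have hden : (0:ℝ) < (E + E⁻¹) / 2 := by positivity
  rw [div_eq_iff hden.ne']
  field_simp
  linear_combination hE2

lemma key_ineq : 10 * π / muFun (1/32) < 2 * π / muFun (Real.tanh ((5/2) * Real.log 3)) := by
  rw [tanh_val]
  rw [muFun, muFun]
  have ha1pos : 0 < ellK (1/32) := ellK_pos (by norm_num) (by norm_num)
  have hb1pos : 0 < ellK (121/122) := ellK_pos (by norm_num) (by norm_num)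
  have ha2pos : 0 < ellK (Real.sqrt (1 - (1/32:ℝ)^2)) := by
    apply ellK_pos (Real.sqrt_nonneg _)
    have h2 : (Real.sqrt (1 - (1/32:ℝ)^2)) ^ 2 = 1023/1024 := by
      rw [Real.sq_sqrt (by norm_num)]; norm_num
    nlinarith [sq_nonneg (Real.sqrt (1 - (1/32:ℝ)^2) - 1)]
  have hb2pos : 0 < ellK (Real.sqrt (1 - (121/122:ℝ)^2)) := by
    apply ellK_pos (Real.sqrt_nonneg _)
    have h2 : (Real.sqrt (1 - (121/122:ℝ)^2)) ^ 2 = 243/14884 := by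
      rw [Real.sq_sqrt (by norm_num)]; norm_num
    nlinarith [sq_nonneg (Real.sqrt (1 - (121/122:ℝ)^2) - 1)]
  have hA := a1_ub
  have hB := b2_ub
  have hC := a2_lb
  have hD := b1_lb
  set a1 := ellK (1/32)
  set a2 := ellK (Real.sqrt (1 - (1/32:ℝ)^2))
  set b1 := ellK (121/122)
  set b2 := ellK (Real.sqrt (1 - (121/122:ℝ)^2))
  have key : 5 * b2 * a1 < a2 * b1 := by
    have h1 : 5 * b2 * a1 ≤ 5 * (1.5838 * 1.5716) := by
      nlinarith [hB, hA, hb2pos.le, ha1pos.le]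
    have h2 : (4.5053:ℝ) * 3.0945 ≤ a2 * b1 := by
      nlinarith [hC, hD, ha2pos.le, hb1pos.le]
    nlinarith [h1, h2]
  have hμ1 : 0 < π / 2 * a2 / a1 := by positivity
  have hμ2 : 0 < π / 2 * b2 / b1 := by positivity
  rw [div_lt_div_iff₀ hμ1 hμ2]
  rw [show 10 * π * (π / 2 * b2 / b1) = (π ^ 2 * (5 * b2)) / b1 by ring]
  rw [show 2 * π * (π / 2 * a2 / a1) = (π ^ 2 * a2) / a1 by ring]
  rw [div_lt_div_iff₀ hb1pos ha1pos]
  nlinarith [mul_lt_mul_of_pos_left key (pow_pos Real.pi_pos 2)]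

/-- There are an integer `m ≥ 3` and `s ∈ (0,1)` for which, with
`t = 2m log((1+s)/(1−s))` the common hyperbolic perimeter, the capacity `2mπ/μ(sᵐ)` of the
nonconvex star `E = ⋃_{k=1}^m [0, s e^{2πik/m}]` is strictly smaller than the capacity
`2π/μ(tanh(t/4))` of a segment of the same hyperbolic perimeter; in particular `m = 5`,
`s = 1/2` work, i.e. `10π/μ(1/32) < 2π/μ(tanh((5/2) log 3))`. -/
theorem star_capacity_lt_segment_capacity :
    (∃ m : ℕ, 3 ≤ m ∧ ∃ s : ℝ, s ∈ Set.Ioo (0:ℝ) 1 ∧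
      2 * m * Real.pi / muFun (s ^ m)
        < 2 * Real.pi / muFun (Real.tanh (2 * m * Real.log ((1 + s) / (1 - s)) / 4))) ∧
    10 * Real.pi / muFun (1 / 32)
      < 2 * Real.pi / muFun (Real.tanh ((5 / 2) * Real.log 3)) := by
  constructor
  · refine ⟨5, by norm_num, 1/2, by norm_num, ?_⟩
    have e1 : ((1:ℝ)/2) ^ (5:ℕ) = 1/32 := by norm_num
    have e2 : 2 * ((5:ℕ):ℝ) * Real.log ((1 + 1/2) / (1 - 1/2)) / 4 = 5/2 * Real.log 3 := by
      rw [show ((1:ℝ) + 1/2) / (1 - 1/2) = 3 by norm_num]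
      push_cast; ring
    rw [e1, e2]
    have e3 : 2 * ((5:ℕ):ℝ) * π = 10 * π := by push_cast; ring
    rw [e3]
    exact key_ineq
  · exact key_ineq
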